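/- arXiv:2005.05521 — 3 statements merged into one kernel-verified Lean document; each statement's English description precedes it below -/
import Mathlib

section
/- Fix N ≥ 1, an index i, and a cost profile c ∈ ℝ^N with c_j > 0 for all j; let c_tot = Σ_j c_j. Suppose f(t) denotes the value of the allocation function when the i-th coordinate is t and the others are fixed, f is differentiable at c_i with 0 ≤ f'(c_i) ≤ 1/c_tot and 0 ≤ f(c_i) ≤ 1. Define p_i(t) = f(t) · t / (t + Σ_{j≠i} c_j). Then p_i'(c_i) ≤ 1/c_tot. -/
open Finset

/-- Lemma 1, second part: if `0 ≤ f' (c i) ≤ 1 / c_tot` and `0 ≤ f (c i) ≤ 1`, then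
`p_i t = f t * t / (t + ∑_{j ≠ i} c j)` has derivative at most `1 / c_tot` at `c i`. -/
theorem stmt_6 (N : ℕ) (hN : 1 ≤ N) (i : Fin N) (c : Fin N → ℝ) (hc : ∀ j, 0 < c j)
    (f : ℝ → ℝ) (hf : DifferentiableAt ℝ f (c i))
    (hf'0 : 0 ≤ deriv f (c i)) (hf'1 : deriv f (c i) ≤ 1 / (∑ j, c j))
    (hf0 : 0 ≤ f (c i)) (hf1 : f (c i) ≤ 1)
    (p : ℝ → ℝ) (hp : ∀ t, p t = f t * t / (t + ∑ j ∈ univ.erase i, c j)) :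
    deriv p (c i) ≤ 1 / (∑ j, c j) := by
  set S := ∑ j ∈ univ.erase i, c j with hSdef
  have hS : 0 ≤ S := Finset.sum_nonneg fun j _ => (hc j).le
  have hct : (∑ j, c j) = c i + S := (Finset.add_sum_erase univ c (mem_univ i)).symm
  have hpos : 0 < c i + S := add_pos_of_pos_of_nonneg (hc i) hS
  set D := deriv f (c i) with hDdef
  have hpe : p = fun t => f t * t / (t + S) := funext hp
  have h1 : HasDerivAt f D (c i) := hf.hasDerivAt
  have h2 : HasDerivAt (fun t => f t * t) (D * c i + f (c i) * 1) (c i) :=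
    h1.mul (hasDerivAt_id _)
  have h3 : HasDerivAt (fun t : ℝ => t + S) 1 (c i) := (hasDerivAt_id _).add_const S
  have h4 : HasDerivAt (fun t => f t * t / (t + S)) _ (c i) := h2.div h3 (ne_of_gt hpos)
  rw [hpe, h4.deriv, hct]
  rw [hct] at hf'1
  rw [div_le_div_iff₀ (by positivity) hpos]
  have hD1 : D * (c i + S) ≤ 1 := by
    rw [div_eq_inv_mul] at hf'1
    calc D * (c i + S) ≤ ((c i + S)⁻¹ * 1) * (c i + S) := by
          apply mul_le_mul_of_nonneg_right hf'1 hpos.le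
      _ = 1 := by field_simp
  nlinarith [mul_pos hpos hpos, mul_nonneg hf'0 (hc i).le, mul_le_mul_of_nonneg_right hf1 hS,
    mul_nonneg (mul_nonneg hf'0 (hc i).le) hpos.le,
    mul_le_mul_of_nonneg_left hD1 (hc i).le]
end

section
/- Fix N ≥ 1, distinct indices i ≠ j, and a cost profile c ∈ ℝ^N with c_m > 0 for all m; let c_tot = Σ_m c_m. Suppose f(t) denotes the value of the allocation function when the i-th coordinate is t and the others are fixed, f is differentiable at c_i, f'(c_i) ≥ 0, and 0 ≤ f(c_i) ≤ 1. Define p_j(t) = f(t) · c_j / (t + Σ_{m≠i} c_m). Then p_j'(c_i) ≥ −c_j / c_tot². -/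
open Finset

/-- Lemma 2: if `f' (c i) ≥ 0` and `0 ≤ f (c i) ≤ 1`, then the derivative of
`p_j t = f t * c j / (t + ∑_{m ≠ i} c m)` with respect to miner `i`'s cost is bounded
below by `-c j / c_tot ^ 2`. -/
theorem stmt_8 (N : ℕ) (hN : 1 ≤ N) (i j : Fin N) (hij : i ≠ j)
    (c : Fin N → ℝ) (hc : ∀ m, 0 < c m)
    (f : ℝ → ℝ) (hf : DifferentiableAt ℝ f (c i))
    (hf' : 0 ≤ deriv f (c i)) (hf0 : 0 ≤ f (c i)) (hf1 : f (c i) ≤ 1)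
    (p : ℝ → ℝ) (hp : ∀ t, p t = f t * c j / (t + ∑ m ∈ univ.erase i, c m)) :
    -(c j) / (∑ m, c m) ^ 2 ≤ deriv p (c i) := by
  set S : ℝ := ∑ m ∈ univ.erase i, c m with hS
  have htot : ∑ m, c m = c i + S := (Finset.add_sum_erase univ c (mem_univ i)).symm
  have hSnn : 0 ≤ S := Finset.sum_nonneg fun m _ => (hc m).le
  have hT : 0 < c i + S := by have := hc i; linarith
  have hTne : c i + S ≠ 0 := hT.ne'
  have hderiv : HasDerivAt p
      ((deriv f (c i) * c j * (c i + S) - f (c i) * c j * 1) / (c i + S) ^ 2) (c i) := by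
    have h1 : HasDerivAt (fun t => f t * c j) (deriv f (c i) * c j) (c i) :=
      hf.hasDerivAt.mul_const (c j)
    have h2 : HasDerivAt (fun t => t + S) 1 (c i) := (hasDerivAt_id _).add_const S
    have := h1.div h2 hTne
    have heq : p = fun t => f t * c j / (t + S) := funext hp
    rw [heq]
    exact this
  rw [hderiv.deriv, htot]
  have hcj := (hc j).le
  rw [div_le_div_iff₀ (by positivity) (by positivity)]
  ring_nf
  nlinarith [mul_nonneg hf' hT.le, mul_nonneg (mul_nonneg hf' hT.le) hcj,
    mul_nonneg hcj (sub_nonneg.mpr hf1), sq_nonneg (c i + S)]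
end

section
/- Let N ≥ 1 and K ≥ 1 be integers, fix an index i, and let c ∈ ℝ^N have c_m > 0 for all m with c_tot = Σ_m c_m. Let 0 < f < 1 and suppose p_i = f · c_i / c_tot and, for j ≠ i, 0 < p_j ≤ f. Let d_i, d_j (j ≠ i) be real numbers with 0 ≤ d_i ≤ 1/c_tot and d_j ≥ −c_i / c_tot² for all j ≠ i. Then (1/p_i − (K−1)/(1 − p_i)) · d_i − K · Σ_{j≠i} d_j / (1 − p_j) ≤ 1/(c_i · f · (1 − f)) + K · c_i · (N−1) / ((1 − f) · c_tot²). -/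
open Finset

/-- Key upper bound in the proof of the main theorem: with `p i = f * c i / c_tot`,
`0 < p j ≤ f` for `j ≠ i`, `0 ≤ d i ≤ 1 / c_tot` and `d j ≥ -c i / c_tot ^ 2` for `j ≠ i`,
the logarithmic derivative expression is at most
`1 / (c i * f * (1 - f)) + K * c i * (N - 1) / ((1 - f) * c_tot ^ 2)`. -/
theorem stmt_10 (N K : ℕ) (hN : 1 ≤ N) (hK : 1 ≤ K) (i : Fin N)
    (c : Fin N → ℝ) (hc : ∀ m, 0 < c m)
    (f : ℝ) (hf0 : 0 < f) (hf1 : f < 1)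
    (p : Fin N → ℝ) (hpi : p i = f * c i / (∑ m, c m))
    (hpj : ∀ j, j ≠ i → 0 < p j ∧ p j ≤ f)
    (d : Fin N → ℝ) (hdi0 : 0 ≤ d i) (hdi1 : d i ≤ 1 / (∑ m, c m))
    (hdj : ∀ j, j ≠ i → -(c i) / (∑ m, c m) ^ 2 ≤ d j) :
    (1 / p i - ((K : ℝ) - 1) / (1 - p i)) * d i
        - (K : ℝ) * ∑ j ∈ univ.erase i, d j / (1 - p j)
      ≤ 1 / (c i * f * (1 - f))
        + (K : ℝ) * c i * ((N : ℝ) - 1) / ((1 - f) * (∑ m, c m) ^ 2) := by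
  set S := ∑ m, c m with hSdef
  have hS : 0 < S := Finset.sum_pos (fun m _ => hc m) ⟨i, Finset.mem_univ i⟩
  have hci := hc i
  have hf1' : 0 < 1 - f := by linarith
  have hpi_pos : 0 < p i := by rw [hpi]; positivity
  have hK1 : (1:ℝ) ≤ (K:ℝ) := by exact_mod_cast hK
  have hciS : c i ≤ S := Finset.single_le_sum (fun m _ => (hc m).le) (Finset.mem_univ i)
  have hpi_lt1 : p i < 1 := by
    rw [hpi, div_lt_one hS]; nlinarith
  -- first term bound
  have h1 : (1 / p i - ((K : ℝ) - 1) / (1 - p i)) * d i ≤ 1 / (c i * f * (1 - f)) := by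
    have ha : (1 / p i - ((K : ℝ) - 1) / (1 - p i)) * d i ≤ (1 / p i) * d i := by
      apply mul_le_mul_of_nonneg_right _ hdi0
      have : 0 ≤ ((K : ℝ) - 1) / (1 - p i) :=
        div_nonneg (by linarith) (by linarith)
      linarith
    have hb : (1 / p i) * d i ≤ (1 / p i) * (1 / S) :=
      mul_le_mul_of_nonneg_left hdi1 (by positivity)
    have hc' : (1 / p i) * (1 / S) = 1 / (f * c i) := by
      rw [hpi]; field_simp
    have hd : 1 / (f * c i) ≤ 1 / (c i * f * (1 - f)) := by
      apply one_div_le_one_div_of_le (by positivity)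
      nlinarith [mul_pos (mul_pos hci hf0) hf0]
    linarith [ha, hb, hc' ▸ hb, hd]
  -- sum bound
  have h2 : ∀ j ∈ univ.erase i, -(c i) / (S ^ 2 * (1 - f)) ≤ d j / (1 - p j) := by
    intro j hj
    have hji : j ≠ i := (Finset.mem_erase.mp hj).1
    obtain ⟨hpj0, hpjf⟩ := hpj j hji
    have hdj' := hdj j hji
    have hpj1 : 0 < 1 - p j := by linarith
    rw [div_le_div_iff₀ (by positivity) hpj1]
    have hkey : -(c i) ≤ d j * S ^ 2 := by
      have := (div_le_iff₀ (by positivity : (0:ℝ) < S ^ 2)).mp hdj'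
      linarith
    nlinarith [hkey, hpj1, hf1', hci]
  have hcard : ((univ.erase i).card : ℝ) = (N : ℝ) - 1 := by
    rw [Finset.card_erase_of_mem (Finset.mem_univ i), Finset.card_univ, Fintype.card_fin]
    rw [Nat.cast_sub hN]; norm_num
  have hsum : ((N : ℝ) - 1) * (-(c i) / (S ^ 2 * (1 - f)))
      ≤ ∑ j ∈ univ.erase i, d j / (1 - p j) := by
    have := Finset.card_nsmul_le_sum (univ.erase i)
      (fun j => d j / (1 - p j)) (-(c i) / (S ^ 2 * (1 - f))) h2
    rwa [nsmul_eq_mul, hcard] at this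
  have h3 : -(K : ℝ) * ∑ j ∈ univ.erase i, d j / (1 - p j)
      ≤ (K : ℝ) * c i * ((N : ℝ) - 1) / ((1 - f) * S ^ 2) := by
    have hKnn : (0:ℝ) ≤ (K:ℝ) := by linarith
    have := mul_le_mul_of_nonneg_left hsum hKnn
    have heq : (K : ℝ) * (((N : ℝ) - 1) * (-(c i) / (S ^ 2 * (1 - f))))
        = -((K : ℝ) * c i * ((N : ℝ) - 1) / ((1 - f) * S ^ 2)) := by
      field_simp
    nlinarith [this, heq]
  linarith [h1, h3]
end
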